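/- Assume char(K) = 0. Let J be a Borel-fixed monomial ideal in S = K[x_1,...,x_n] with decomposition J = Σ_{j=0}^{α} x_1^j · (I_j · S), where I_j = (J : x_1^j) ∩ K[x_2,...,x_n]. Then α equals the initial degree of J (the smallest degree of a nonzero element of J), I_α = (1), and each I_j is a Borel-fixed monomial ideal of K[x_2,...,x_n]. -/

import Mathlib

open MvPolynomial

/-- A monomial ideal: an ideal generated by monomials. -/
def IsMonomialIdeal {K : Type} [Field K] {m : ℕ} (J : Ideal (MvPolynomial (Fin m) K)) : Prop :=
  ∃ G : Set (Fin m →₀ ℕ), J = Ideal.span ((fun d => (monomial d (1 : K))) '' G)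

/-- `d` is the exponent vector of a minimal monomial generator of the monomial ideal `J`. -/
def IsMinGen {K : Type} [Field K] {m : ℕ} (J : Ideal (MvPolynomial (Fin m) K))
    (d : Fin m →₀ ℕ) : Prop :=
  (monomial d (1 : K)) ∈ J ∧
    ∀ i : Fin m, 0 < d i → (monomial (d - Finsupp.single i 1) (1 : K)) ∉ J

/-- Borel-fixed monomial ideal: stable under the moves `m ↦ (x_j/x_i)·m` for `j < i`. -/
def IsBorelFixed {K : Type} [Field K] {m : ℕ} (J : Ideal (MvPolynomial (Fin m) K)) : Prop :=
  IsMonomialIdeal J ∧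
    ∀ d : Fin m →₀ ℕ, (monomial d (1 : K)) ∈ J → ∀ i j : Fin m, j < i → 0 < d i →
      (monomial (d - Finsupp.single i 1 + Finsupp.single j 1) (1 : K)) ∈ J

/-- The inclusion `K[x_2,...,x_{n+1}] → K[x_1,...,x_{n+1}]` (variable index 0 is `x_1`). -/
noncomputable def varShift (K : Type) [Field K] (n : ℕ) :
    MvPolynomial (Fin n) K →ₐ[K] MvPolynomial (Fin (n + 1)) K :=
  rename Fin.succ

/-- `I_j = (J : x_1^j) ∩ K[x_2,...,x_{n+1}]`, an ideal of `T = K[x_2,...,x_{n+1}]`. -/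
noncomputable def sliceIdeal {K : Type} [Field K] {n : ℕ}
    (J : Ideal (MvPolynomial (Fin (n + 1)) K)) (j : ℕ) : Ideal (MvPolynomial (Fin n) K) :=
  Ideal.comap (varShift K n) (J.colon (Ideal.span {(X 0 : MvPolynomial (Fin (n + 1)) K) ^ j}))

/-- The Hilbert function of `S/J`: the `K`-dimension of the degree `s` part. -/
noncomputable def hilb {K : Type} [Field K] {m : ℕ}
    (J : Ideal (MvPolynomial (Fin m) K)) (s : ℕ) : ℕ :=
  Module.finrank K (homogeneousSubmodule (Fin m) K s) -
    Module.finrank K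
      (homogeneousSubmodule (Fin m) K s ⊓ Submodule.restrictScalars K J :
        Submodule K (MvPolynomial (Fin m) K))

/-- A homogeneous ideal (with respect to total degree). -/
def IsHomogeneousIdeal {K : Type} [Field K] {m : ℕ}
    (I : Ideal (MvPolynomial (Fin m) K)) : Prop :=
  ∀ p ∈ I, ∀ k : ℕ, (homogeneousComponent k p) ∈ I

/-- `α` is the initial degree of `J`: the least degree of a nonzero (homogeneous) element. -/
def IsInitialDegree {K : Type} [Field K] {m : ℕ}
    (J : Ideal (MvPolynomial (Fin m) K)) (α : ℕ) : Prop :=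
  IsLeast {k : ℕ | ∃ p ∈ J, p ≠ 0 ∧ MvPolynomial.IsHomogeneous p k} α

/-- The height (codimension) of an ideal: the infimum of heights of primes containing it. -/
noncomputable def idealHeight {R : Type} [CommRing R] (I : Ideal R) : ℕ∞ :=
  ⨅ (P : PrimeSpectrum R) (_ : I ≤ P.asIdeal), Order.height P

/-- `S/J` is Cohen-Macaulay: there is a regular sequence inside the irrelevant maximal
ideal of length equal to the Krull dimension of `S/J`. -/
def IsCMQuotient {K : Type} [Field K] {m : ℕ} (J : Ideal (MvPolynomial (Fin m) K)) : Prop :=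
  ∃ rs : List (MvPolynomial (Fin m) K),
    (∀ f ∈ rs, f ∈ Ideal.span (Set.range (X : Fin m → MvPolynomial (Fin m) K))) ∧
    RingTheory.Sequence.IsRegular (MvPolynomial (Fin m) K ⧸ J) rs ∧
    (rs.length : WithBot ℕ∞) = ringKrullDim (MvPolynomial (Fin m) K ⧸ J)

/-- An unmixed ideal: all associated primes of `R/I` have the same height, namely that of `I`. -/
def IsUnmixed {K : Type} [Field K] {m : ℕ} (I : Ideal (MvPolynomial (Fin m) K)) : Prop :=
  ∀ P ∈ associatedPrimes (MvPolynomial (Fin m) K) (MvPolynomial (Fin m) K ⧸ I),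
    idealHeight P = idealHeight I

/-- Degree-lexicographic order on exponent vectors: `d > e`. -/
def DegLexGT {m : ℕ} (d e : Fin m →₀ ℕ) : Prop :=
  (e.sum fun _ k => k) < (d.sum fun _ k => k) ∨
    ((d.sum fun _ k => k) = (e.sum fun _ k => k) ∧
      ∃ i : Fin m, (∀ k < i, d k = e k) ∧ e i < d i)

/-- A lex-segment monomial ideal. -/
def IsLexSegment {K : Type} [Field K] {m : ℕ} (J : Ideal (MvPolynomial (Fin m) K)) : Prop :=
  IsMonomialIdeal J ∧
    ∀ d e : Fin m →₀ ℕ, (d.sum fun _ k => k) = (e.sum fun _ k => k) →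
      DegLexGT d e → (monomial e (1 : K)) ∈ J → (monomial d (1 : K)) ∈ J

/-- `macaulayBound d a = a^{⟨d⟩}`, the Macaulay upper bound computed from the `d`-th
binomial expansion of `a`. -/
def macaulayBound : ℕ → ℕ → ℕ
  | _, 0 => 0
  | 0, _ + 1 => 0
  | d + 1, a + 1 =>
    let k := Nat.findGreatest (fun k => Nat.choose k (d + 1) ≤ a + 1) (a + d + 2)
    Nat.choose (k + 1) (d + 2) + macaulayBound d (a + 1 - Nat.choose k (d + 1))

/-- The first difference of a numerical function (with `f(-1) = 0`). -/
def delta (f : ℕ → ℤ) : ℕ → ℤ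
  | 0 => f 0
  | n + 1 => f (n + 1) - f n

/-- An O-sequence: `f(0) = 1`, nonnegative, satisfying Macaulay's growth condition. -/
def IsOSequence (f : ℕ → ℤ) : Prop :=
  f 0 = 1 ∧ (∀ t, 0 ≤ f t) ∧ ∀ t, 1 ≤ t → f (t + 1) ≤ (macaulayBound t (f t).toNat : ℤ)


section Helpers
variable {K : Type} [Field K]

lemma degree_eq_sum_univ {m : ℕ} (d : Fin m →₀ ℕ) : d.degree = ∑ i, d i :=
  Finset.sum_subset (Finset.subset_univ _) (fun i _ h => Finsupp.notMem_support_iff.mp h)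

lemma monomial_mem_span_iff {m : ℕ} {G : Set (Fin m →₀ ℕ)} {d : Fin m →₀ ℕ} :
    (monomial d (1:K)) ∈ Ideal.span ((fun d => (monomial d (1 : K))) '' G) ↔ ∃ g ∈ G, g ≤ d := by
  rw [mem_ideal_span_monomial_image]
  constructor
  · intro h; exact h d (by simp [support_monomial])
  · intro h xi hxi
    have hxd : d = xi := by simpa [support_monomial] using hxi
    rw [← hxd] at hxi ⊢; exact h

lemma shift_apply_zero {n : ℕ} (d : Fin n →₀ ℕ) : (d.mapDomain Fin.succ) 0 = 0 :=
  Finsupp.mapDomain_notin_range _ _ (by simp [Fin.succ_ne_zero, eq_comm])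

lemma shift_apply_succ {n : ℕ} (d : Fin n →₀ ℕ) (k : Fin n) : (d.mapDomain Fin.succ) k.succ = d k :=
  Finsupp.mapDomain_apply (Fin.succ_injective n) d k

end Helpers

section PP
variable {K : Type} [Field K]

lemma sum_single_univ {m : ℕ} (i : Fin m) (c : ℕ) : ∑ k, (Finsupp.single i c) k = c := by
  rw [Finset.sum_eq_single i] <;> simp +contextual [Finsupp.single_apply]

lemma pure_power_mem {n : ℕ} {J : Ideal (MvPolynomial (Fin (n+1)) K)} (hB : IsBorelFixed J)
    {d : Fin (n+1) →₀ ℕ} (hd : monomial d (1:K) ∈ J) :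
    monomial (Finsupp.single 0 d.degree) (1:K) ∈ J := by
  suffices H : ∀ N (d : Fin (n+1) →₀ ℕ), (∑ i ∈ Finset.univ.erase 0, d i) ≤ N →
      monomial d (1:K) ∈ J → monomial (Finsupp.single 0 d.degree) (1:K) ∈ J from
    H _ d le_rfl hd
  have base : ∀ d : Fin (n+1) →₀ ℕ, (∑ i ∈ Finset.univ.erase 0, d i) = 0 →
      monomial d (1:K) ∈ J → monomial (Finsupp.single 0 d.degree) (1:K) ∈ J := by
    intro d h0 hd
    have hall : ∀ i : Fin (n+1), i ≠ 0 → d i = 0 := fun i hi =>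
      Finset.sum_eq_zero_iff.mp h0 i (by simp [hi])
    have hdeq : Finsupp.single 0 d.degree = d := by
      rw [degree_eq_sum_univ, Finset.sum_eq_single 0]
      · ext i
        rcases eq_or_ne i 0 with rfl | hi
        · simp
        · simp [Finsupp.single_apply, Ne.symm hi, hall i hi]
      · intro b _ hb; exact hall b hb
      · simp
    rw [hdeq]; exact hd
  intro N
  induction N with
  | zero => exact fun d h0 => base d (Nat.le_zero.mp h0)
  | succ N ih =>
    intro d h0 hd
    rcases Nat.eq_zero_or_pos (∑ i ∈ Finset.univ.erase 0, d i) with hz | hz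
    · exact base d hz hd
    · obtain ⟨i, hi, hpos⟩ : ∃ i ∈ Finset.univ.erase 0, 0 < d i := by
        by_contra hcon
        push_neg at hcon
        have : (∑ i ∈ Finset.univ.erase 0, d i) = 0 :=
          Finset.sum_eq_zero fun i hI => Nat.le_zero.mp (hcon i hI)
        omega
      have hi0 : i ≠ 0 := (Finset.mem_erase.mp hi).1
      have hmove := hB.2 d hd i 0 (Fin.pos_of_ne_zero hi0) hpos
      set d' := d - Finsupp.single i 1 + Finsupp.single 0 1 with hd'
      have hkey : d' + Finsupp.single i 1 = d + Finsupp.single 0 1 := by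
        rw [hd', add_right_comm, tsub_add_cancel_of_le (Finsupp.single_le_iff.mpr hpos)]
      have hdeg : d'.degree = d.degree := by
        have := congrArg (fun f : Fin (n+1) →₀ ℕ => ∑ k, f k) hkey
        simp only [Finsupp.add_apply, Finset.sum_add_distrib, sum_single_univ] at this
        rw [degree_eq_sum_univ, degree_eq_sum_univ]; omega
      have hoff : (∑ k ∈ Finset.univ.erase 0, d' k) ≤ N := by
        have := congrArg (fun f : Fin (n+1) →₀ ℕ => ∑ k ∈ Finset.univ.erase 0, f k) hkey
        simp only [Finsupp.add_apply, Finset.sum_add_distrib] at this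
        have h1 : ∑ k ∈ Finset.univ.erase 0, (Finsupp.single i 1) k = 1 := by
          rw [Finset.sum_eq_single i]
          · simp
          · intro b _ hb; simp [Finsupp.single_apply, Ne.symm hb]
          · intro h; exact absurd hi h
        have h2 : ∑ k ∈ Finset.univ.erase (0 : Fin (n+1)), (Finsupp.single (0:Fin (n+1)) 1) k = 0 := by
          apply Finset.sum_eq_zero
          intro b hb
          simp [Finsupp.single_apply, Ne.symm (Finset.mem_erase.mp hb).1]
        omega
      have := ih d' hoff hmove
      rwa [hdeg] at this
end PP


section Slice
variable {K : Type} [Field K] {n : ℕ}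

lemma single_succ_apply_succ (i k : Fin n) (c : ℕ) :
    (Finsupp.single i.succ c) k.succ = Finsupp.single i c k := by
  simp [Finsupp.single_apply, Fin.succ_inj]

lemma single_succ_apply_zero (i : Fin n) (c : ℕ) :
    (Finsupp.single i.succ c) (0 : Fin (n+1)) = 0 :=
  Finsupp.single_eq_of_ne (Fin.succ_ne_zero i).symm

lemma single_zero_apply_succ (k : Fin n) (c : ℕ) :
    (Finsupp.single (0 : Fin (n+1)) c) k.succ = 0 :=
  Finsupp.single_eq_of_ne (Fin.succ_ne_zero k)

lemma mem_sliceIdeal_iff (J : Ideal (MvPolynomial (Fin (n + 1)) K)) (j : ℕ)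
    (p : MvPolynomial (Fin n) K) :
    p ∈ sliceIdeal J j ↔ rename Fin.succ p * (X 0 : MvPolynomial (Fin (n+1)) K) ^ j ∈ J := by
  rw [sliceIdeal, Ideal.mem_comap, Ideal.mem_colon_span_singleton]
  rfl

lemma monomial_mem_sliceIdeal_iff (J : Ideal (MvPolynomial (Fin (n + 1)) K)) (j : ℕ)
    (d : Fin n →₀ ℕ) :
    monomial d (1:K) ∈ sliceIdeal J j ↔
      monomial (d.mapDomain Fin.succ + Finsupp.single 0 j) (1:K) ∈ J := by
  rw [mem_sliceIdeal_iff, rename_monomial, X_pow_eq_monomial, monomial_mul, mul_one]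

lemma slice_borel {J : Ideal (MvPolynomial (Fin (n+1)) K)}
    (hB : IsBorelFixed J) (j : ℕ) : IsBorelFixed (sliceIdeal J j) := by
  obtain ⟨G, hG⟩ := hB.1
  have memJ : ∀ e : Fin (n+1) →₀ ℕ, monomial e (1:K) ∈ J ↔ ∃ g ∈ G, g ≤ e := by
    intro e; rw [hG]; exact monomial_mem_span_iff
  constructor
  · refine ⟨{d | monomial (d.mapDomain Fin.succ + Finsupp.single 0 j) (1:K) ∈ J},
      le_antisymm ?_ ?_⟩
    · intro p hp
      rw [mem_ideal_span_monomial_image]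
      intro d hd
      refine ⟨d, ?_, le_rfl⟩
      have hq : rename Fin.succ p * (X 0 : MvPolynomial (Fin (n+1)) K) ^ j ∈ J :=
        (mem_sliceIdeal_iff J j p).mp hp
      have hc : coeff (d.mapDomain Fin.succ + Finsupp.single 0 j)
          (rename Fin.succ p * (X 0 : MvPolynomial (Fin (n+1)) K) ^ j) = coeff d p := by
        rw [X_pow_eq_monomial, coeff_mul_monomial, mul_one,
            coeff_rename_mapDomain _ (Fin.succ_injective n)]
      have hmem : (d.mapDomain Fin.succ + Finsupp.single 0 j) ∈
          (rename Fin.succ p * (X 0 : MvPolynomial (Fin (n+1)) K) ^ j).support := by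
        rw [mem_support_iff, hc]; exact mem_support_iff.mp hd
      obtain ⟨g, hgG, hgle⟩ := (mem_ideal_span_monomial_image).mp (hG ▸ hq) _ hmem
      exact (memJ _).mpr ⟨g, hgG, hgle⟩
    · rw [Ideal.span_le]
      rintro x ⟨d, hd, rfl⟩
      exact (monomial_mem_sliceIdeal_iff J j d).mpr hd
  · intro d hd i j' hj' hpos
    rw [monomial_mem_sliceIdeal_iff] at hd ⊢
    have hEpos : 0 < (Finsupp.mapDomain Fin.succ d + Finsupp.single (0 : Fin (n+1)) j :
        Fin (n+1) →₀ ℕ) i.succ := by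
      rwa [Finsupp.add_apply, shift_apply_succ, single_zero_apply_succ, add_zero]
    have hmv := hB.2 _ hd i.succ j'.succ (by simpa [Fin.succ_lt_succ_iff] using hj') hEpos
    have heq : (d - Finsupp.single i 1 + Finsupp.single j' 1).mapDomain Fin.succ +
          Finsupp.single 0 j
        = d.mapDomain Fin.succ + Finsupp.single 0 j - Finsupp.single i.succ 1 +
          Finsupp.single j'.succ 1 := by
      ext k
      induction k using Fin.cases with
      | zero =>
        simp only [Finsupp.add_apply, Finsupp.tsub_apply, shift_apply_zero,
          single_succ_apply_zero, Finsupp.single_eq_same]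
        omega
      | succ k =>
        simp only [Finsupp.add_apply, Finsupp.tsub_apply, shift_apply_succ,
          single_succ_apply_succ, single_zero_apply_succ]
        omega
    rw [heq]; exact hmv

end Slice

/-- decomposition of a Borel-fixed ideal in characteristic zero. -/
theorem borel_fixed_decomposition {K : Type} [Field K] [CharZero K] {n : ℕ} (α : ℕ)
    (J : Ideal (MvPolynomial (Fin (n + 1)) K))
    (hB : IsBorelFixed J)
    (hex : ∃ d, IsMinGen J d ∧ d 0 = α)
    (hmax : ∀ d, IsMinGen J d → d 0 ≤ α) :
    IsInitialDegree J α ∧ sliceIdeal J α = ⊤ ∧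
      ∀ j, j ≤ α → IsBorelFixed (sliceIdeal J j) := by
  obtain ⟨G, hG⟩ := hB.1
  have memJ : ∀ e : Fin (n+1) →₀ ℕ, monomial e (1:K) ∈ J ↔ ∃ g ∈ G, g ≤ e := by
    intro e; rw [hG]; exact monomial_mem_span_iff
  have up : ∀ {e e' : Fin (n+1) →₀ ℕ}, monomial e (1:K) ∈ J → e ≤ e' →
      monomial e' (1:K) ∈ J := by
    intro e e' he hle
    obtain ⟨g, hgG, hge⟩ := (memJ e).mp he
    exact (memJ e').mpr ⟨g, hgG, hge.trans hle⟩
  obtain ⟨d0, hmin, hd0⟩ := hex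
  -- there is some pure power of x_1 in J
  have hPP : ∃ k, monomial (Finsupp.single 0 k) (1:K) ∈ J :=
    ⟨d0.degree, pure_power_mem hB hmin.1⟩
  classical
  set k0 := Nat.find hPP with hk0def
  have hk0mem : monomial (Finsupp.single 0 k0) (1:K) ∈ J := Nat.find_spec hPP
  -- single 0 k0 is a minimal generator
  have hk0min : IsMinGen J (Finsupp.single 0 k0) := by
    refine ⟨hk0mem, ?_⟩
    intro i hipos hcon
    have hi0 : i = 0 := by
      by_contra hne
      rw [Finsupp.single_apply] at hipos
      simp [Ne.symm hne] at hipos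
    subst hi0
    have hk0pos : 0 < k0 := by
      rw [Finsupp.single_eq_same] at hipos; exact hipos
    have hsub : Finsupp.single (0 : Fin (n+1)) k0 - Finsupp.single 0 1
        = Finsupp.single 0 (k0 - 1) := by
      ext k; rcases eq_or_ne k 0 with rfl | hk
      · simp [Finsupp.tsub_apply]
      · simp [Finsupp.tsub_apply, Finsupp.single_apply, Ne.symm hk]
    rw [hsub] at hcon
    exact Nat.find_min hPP (by omega) hcon
  have hk0le : k0 ≤ α := by simpa using hmax _ hk0min
  -- x_1^α ∈ J
  have hXα : monomial (Finsupp.single 0 α) (1:K) ∈ J :=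
    up hk0mem (by intro k; simp only [Finsupp.single_apply]; split <;> omega)
  -- α ≤ k0
  have hαle : α ≤ k0 := by
    rcases Nat.eq_zero_or_pos α with h0 | hαpos
    · omega
    · by_contra hcon
      push_neg at hcon
      have hd00 : 0 < d0 0 := by rw [hd0]; exact hαpos
      apply hmin.2 0 hd00
      apply up hk0mem
      intro k
      rcases eq_or_ne k 0 with rfl | hk
      · simp only [Finsupp.tsub_apply, Finsupp.single_eq_same, hd0]; omega
      · simp [Finsupp.single_apply, Ne.symm hk]
  -- every monomial of J has degree ≥ α
  have hlow : ∀ e : Fin (n+1) →₀ ℕ, monomial e (1:K) ∈ J → α ≤ e.degree := by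
    intro e he
    have := Nat.find_min' hPP (pure_power_mem hB he)
    omega
  refine ⟨⟨⟨monomial (Finsupp.single 0 α) (1:K), hXα, ?_, ?_⟩, ?_⟩, ?_, fun j _ => slice_borel hB j⟩
  · simp [monomial_eq_zero]
  · exact isHomogeneous_monomial _ (by rw [degree_eq_sum_univ, sum_single_univ])
  · rintro k ⟨p, hpJ, hp0, hphom⟩
    obtain ⟨d, hd⟩ := (support_nonempty.mpr hp0)
    obtain ⟨g, hgG, hgle⟩ := mem_ideal_span_monomial_image.mp (hG ▸ hpJ) d hd
    have h1 : α ≤ g.degree := hlow g ((memJ g).mpr ⟨g, hgG, le_rfl⟩)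
    have h2 : g.degree ≤ d.degree := by
      rw [degree_eq_sum_univ, degree_eq_sum_univ]
      exact Finset.sum_le_sum fun i _ => hgle i
    have h3 : d.degree = k := by
      have := hphom (mem_support_iff.mp hd)
      rwa [show (1 : Fin (n+1) → ℕ) = fun _ => 1 from rfl, ← Finsupp.degree_eq_weight_one] at this
    omega
  · rw [Ideal.eq_top_iff_one, sliceIdeal, Ideal.mem_comap, map_one,
      Ideal.mem_colon_span_singleton, one_mul, X_pow_eq_monomial]
    exact hXα
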